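/- Let ξ be a positive irrational real number and suppose (a,b) ∈ 𝒢. Then: (i) if (a,b) ∈ 𝒰₂(ξ), then (a,b) is an upper boundary point for ξ if and only if (a,b) ∈ 𝒰₁(ξ); (ii) if (a,b) ∈ ℒ₁(ξ), then (a,b) is a lower boundary point for ξ if and only if (a,b) ∈ ℒ₂(ξ). -/

import Mathlib

open Real Finset

/-- `𝒩` is encoded by pairs `x : ℕ × ℕ` with `x ≠ (0,0)`.
The upper set `𝒰(ξ) = {(a,b) ∈ 𝒩 : a > bξ}`. -/
def Uset (ξ : ℝ) : Set (ℕ × ℕ) := {x | x ≠ (0, 0) ∧ (x.2 : ℝ) * ξ < (x.1 : ℝ)}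

/-- The lower set `ℒ(ξ) = {(a,b) ∈ 𝒩 : a < bξ}`. -/
def Lset (ξ : ℝ) : Set (ℕ × ℕ) := {x | x ≠ (0, 0) ∧ (x.1 : ℝ) < (x.2 : ℝ) * ξ}

/-- `𝒢 = {(a,b) ∈ 𝒩 : gcd(a,b) = 1}`. -/
def Gset : Set (ℕ × ℕ) := {x | x ≠ (0, 0) ∧ Nat.Coprime x.1 x.2}

/-- `𝒰₁(ξ)`: elements `(a,b)` of `𝒰(ξ)` with `a/b ≤ m/n` (by cross multiplication)
for every `(m,n) ∈ 𝒰(ξ)` with `m ≤ a`. -/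
def U1 (ξ : ℝ) : Set (ℕ × ℕ) :=
  {x | x ∈ Uset ξ ∧ ∀ y ∈ Uset ξ, y.1 ≤ x.1 → x.1 * y.2 ≤ y.1 * x.2}

/-- `𝒰₂(ξ)`: elements `(a,b)` of `𝒰(ξ)` with `a/b ≤ m/n` for every `(m,n) ∈ 𝒰(ξ)`
with `n ≤ b`. -/
def U2 (ξ : ℝ) : Set (ℕ × ℕ) :=
  {x | x ∈ Uset ξ ∧ ∀ y ∈ Uset ξ, y.2 ≤ x.2 → x.1 * y.2 ≤ y.1 * x.2}

/-- `ℒ₁(ξ)`: elements `(a,b)` of `ℒ(ξ)` with `a/b ≥ m/n` for every `(m,n) ∈ ℒ(ξ)`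
with `m ≤ a`. -/
def L1 (ξ : ℝ) : Set (ℕ × ℕ) :=
  {x | x ∈ Lset ξ ∧ ∀ y ∈ Lset ξ, y.1 ≤ x.1 → y.1 * x.2 ≤ x.1 * y.2}

/-- `ℒ₂(ξ)`: elements `(a,b)` of `ℒ(ξ)` with `a/b ≥ m/n` for every `(m,n) ∈ ℒ(ξ)`
with `n ≤ b`. -/
def L2 (ξ : ℝ) : Set (ℕ × ℕ) :=
  {x | x ∈ Lset ξ ∧ ∀ y ∈ Lset ξ, y.2 ≤ x.2 → y.1 * x.2 ≤ x.1 * y.2}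

/-- `(a,b)` is an upper or lower best approximation for `ξ`. -/
def BestApprox (ξ : ℝ) (x : ℕ × ℕ) : Prop :=
  x ∈ Gset ∩ U1 ξ ∨ x ∈ Gset ∩ L2 ξ

/-- A factorization of a positive rational `α ≠ 1`: a tuple of fractions `r n / s n` of
positive integers, none equal to `1`, with `gcd (r m) (s n) = 1` for all `m, n`, whose
product is `α`. -/
def IsFactorization (α : ℚ) {N : ℕ} (r s : Fin N → ℕ) : Prop :=
  (∀ n, 0 < r n) ∧ (∀ n, 0 < s n) ∧ (∀ n, (r n : ℚ) / (s n : ℚ) ≠ 1) ∧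
    (∀ m n, Nat.Coprime (r m) (s n)) ∧ (∏ n, (r n : ℚ) / (s n : ℚ)) = α

/-- The measure function `f_A(t) = (Σₙ m(rₙ/sₙ)^t)^{1/t}` of a factorization, where
`m(rₙ/sₙ) = log max(rₙ, sₙ)`. -/
noncomputable def fmeas {N : ℕ} (r s : Fin N → ℕ) (t : ℝ) : ℝ :=
  (∑ n, (Real.log ((max (r n) (s n) : ℕ) : ℝ)) ^ t) ^ (1 / t)

/-- `(a,b)` is an upper boundary point for `ξ`: `(a,b) ∈ 𝒰(ξ)` and `(a,b+1) ∈ ℒ(ξ)`. -/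
def UpperBoundary (ξ : ℝ) (x : ℕ × ℕ) : Prop :=
  x ∈ Uset ξ ∧ (x.1, x.2 + 1) ∈ Lset ξ

/-- `(a,b)` is a lower boundary point for `ξ`: `(a,b) ∈ ℒ(ξ)` and `(a+1,b) ∈ 𝒰(ξ)`. -/
def LowerBoundary (ξ : ℝ) (x : ℕ × ℕ) : Prop :=
  x ∈ Lset ξ ∧ (x.1 + 1, x.2) ∈ Uset ξ

/-- `(a,b)` is a boundary point for `ξ`. -/
def Boundary (ξ : ℝ) (x : ℕ × ℕ) : Prop :=
  UpperBoundary ξ x ∨ LowerBoundary ξ x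

/-- Lemma `BoundaryBA`: for `(a,b) ∈ 𝒢`, if `(a,b) ∈ 𝒰₂(ξ)` then `(a,b)`
is an upper boundary point iff `(a,b) ∈ 𝒰₁(ξ)`; if `(a,b) ∈ ℒ₁(ξ)` then `(a,b)` is a
lower boundary point iff `(a,b) ∈ ℒ₂(ξ)`. -/
theorem stmt_16 (ξ : ℝ) (hpos : 0 < ξ) (hirr : Irrational ξ) (a b : ℕ)
    (hG : (a, b) ∈ Gset) :
    ((a, b) ∈ U2 ξ → (UpperBoundary ξ (a, b) ↔ (a, b) ∈ U1 ξ)) ∧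
    ((a, b) ∈ L1 ξ → (LowerBoundary ξ (a, b) ↔ (a, b) ∈ L2 ξ)) := by
  constructor
  · rintro ⟨hU, hU2⟩
    have ha0 : 0 < a := by
      rcases Nat.eq_zero_or_pos a with h | h
      · exfalso
        have := hU.2
        simp [h] at this
        nlinarith [Nat.cast_nonneg (α := ℝ) b]
      · exact h
    constructor
    · rintro ⟨_, _, hlt⟩
      refine ⟨hU, fun y hy hm => ?_⟩
      have hn : (y.2 : ℝ) * ξ < (y.1 : ℝ) := hy.2
      have hma : (y.1 : ℝ) ≤ (a : ℝ) := by exact_mod_cast hm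
      have hlt' : (a : ℝ) < ((b : ℝ) + 1) * ξ := by
        have := hlt; push_cast at this ⊢; linarith
      have hy2 : (y.2 : ℝ) * ξ < ((b : ℝ) + 1) * ξ := by linarith
      have hy2' : (y.2 : ℝ) < (b : ℝ) + 1 := lt_of_mul_lt_mul_right hy2 hpos.le
      have hyb : y.2 ≤ b := by exact_mod_cast Nat.lt_succ_iff.mp (by exact_mod_cast hy2')
      exact hU2 y hy hyb
    · rintro ⟨_, hU1⟩
      refine ⟨hU, by simp [Lset], ?_⟩
      by_contra hcon
      push_neg at hcon
      have hne' : ((b : ℝ) + 1) * ξ ≠ (a : ℝ) := by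
        intro heq
        have : Irrational (((b+1 : ℕ) : ℚ) * ξ) := hirr.ratCast_mul (by positivity)
        apply this
        push_cast at heq ⊢
        rw [heq]
        exact ⟨(a : ℚ), by push_cast; ring⟩
      have hgt : ((b : ℝ) + 1) * ξ < (a : ℝ) := lt_of_le_of_ne (by push_cast at hcon ⊢; linarith) hne'
      have hmem : ((a, b+1) : ℕ × ℕ) ∈ Uset ξ := ⟨by simp, by push_cast; linarith⟩
      have := hU1 (a, b+1) hmem le_rfl
      simp only at this
      nlinarith [ha0]
  · rintro ⟨hL, hL1⟩
    have hb0 : 0 < b := by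
      rcases Nat.eq_zero_or_pos b with h | h
      · exfalso
        have := hL.2
        simp [h] at this
        nlinarith [Nat.cast_nonneg (α := ℝ) a]
      · exact h
    constructor
    · rintro ⟨_, _, hlt⟩
      refine ⟨hL, fun y hy hn => ?_⟩
      have hm : (y.1 : ℝ) < (y.2 : ℝ) * ξ := hy.2
      have hnb : (y.2 : ℝ) ≤ (b : ℝ) := by exact_mod_cast hn
      have hlt' : (b : ℝ) * ξ < (a : ℝ) + 1 := by
        have := hlt; push_cast at this ⊢; linarith
      have hy1 : (y.1 : ℝ) < (a : ℝ) + 1 := by nlinarith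
      have hya : y.1 ≤ a := by exact_mod_cast Nat.lt_succ_iff.mp (by exact_mod_cast hy1)
      exact hL1 y hy hya
    · rintro ⟨_, hL2⟩
      refine ⟨hL, by simp [Uset], ?_⟩
      by_contra hcon
      push_neg at hcon
      have hne' : (b : ℝ) * ξ ≠ (a : ℝ) + 1 := by
        intro heq
        have : Irrational (((b : ℕ) : ℚ) * ξ) := hirr.ratCast_mul (by exact_mod_cast hb0.ne')
        apply this
        push_cast
        rw [heq]
        exact ⟨(a : ℚ) + 1, by push_cast; ring⟩
      have hgt : (a : ℝ) + 1 < (b : ℝ) * ξ := lt_of_le_of_ne (by push_cast at hcon ⊢; linarith) (Ne.symm hne')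
      have hmem : ((a+1, b) : ℕ × ℕ) ∈ Lset ξ := ⟨by simp, by push_cast; linarith⟩
      have := hL2 (a+1, b) hmem le_rfl
      simp only at this
      nlinarith [hb0]
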